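/- Let E be a finite-dimensional associative unital normed algebra over ℝ, and let ν, ν', ν'' be Borel probability measures on E. For an integer k ≥ 1, let β_k = ν'^{⊞k} ⊟ ν'^{⊞k} (the law of y₁ + ⋯ + y_k − y_{k+1} − ⋯ − y_{2k} where y₁,…,y_{2k} are i.i.d. with law ν'). Then for every ξ ∈ E*, the Fourier transform (ν * β_k * ν'')^∧(ξ) is a nonnegative real number, and moreover |(ν * ν' * ν'')^∧(ξ)|^{2k} ≤ (ν * β_k * ν'')^∧(ξ). -/

import Mathlib

open MeasureTheory

noncomputable section

variable {E : Type*} [NormedRing E] [NormedAlgebra ℝ E] [FiniteDimensional ℝ E]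
  [MeasurableSpace E] [BorelSpace E]

/-- The determinant of the left-multiplication map `y ↦ x y` on the algebra `E`. -/
def algDet (x : E) : ℝ := LinearMap.det (LinearMap.mulLeft ℝ x)

/-- The non-concentration property `NC₀(ε, κ, τ)` at scale `δ` for a Borel measure on a
finite-dimensional normed algebra `E`:
(i) mass at most `δ^τ` outside the ball of radius `δ^{-ε}`;
(ii) every translate of `S(δ^ε) = {x : |det x| ≤ δ^ε}` has mass at most `δ^τ`;
(iii) every `ρ`-neighborhood (`ρ ≥ δ`) of a proper affine subspace has mass at most
`δ^{-ε} ρ^κ`. -/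
def NCzero (ε κ τ δ : ℝ) (η : Measure E) : Prop :=
  η ((Metric.closedBall (0 : E) (δ ^ (-ε)))ᶜ) ≤ ENNReal.ofReal (δ ^ τ) ∧
  (∀ x : E, η { y : E | |algDet (y - x)| ≤ δ ^ ε } ≤ ENNReal.ofReal (δ ^ τ)) ∧
  ∀ ρ : ℝ, δ ≤ ρ → ∀ W : AffineSubspace ℝ E, W ≠ ⊤ →
    η { x : E | ∃ w ∈ (W : Set E), dist x w ≤ ρ } ≤ ENNReal.ofReal (δ ^ (-ε) * ρ ^ κ)

/-- The non-concentration property `NC(ε, κ, τ)` at scale `δ`: the measure is a sum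
`η₀ + η₁` with `η₀` satisfying `NC₀(ε, κ, τ)` at scale `δ` and `η₁` of total mass at
most `δ^τ`. -/
def NC (ε κ τ δ : ℝ) (η : Measure E) : Prop :=
  ∃ η₀ η₁ : Measure E, η = η₀ + η₁ ∧ NCzero ε κ τ δ η₀ ∧
    η₁ Set.univ ≤ ENNReal.ofReal (δ ^ τ)

/-- The Fourier transform `η̂(ξ) = ∫ e^{2πi ξ(x)} dη(x)` of a measure on `E` at a
continuous linear functional `ξ ∈ E*`. -/
def mFourier (η : Measure E) (ξ : E →L[ℝ] ℝ) : ℂ :=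
  ∫ x, Complex.exp (2 * Real.pi * Complex.I * (ξ x : ℂ)) ∂η

/-- Multiplicative convolution of two measures (for s-finite measures this is the
pushforward of `μ ⊗ ν` under `(x, y) ↦ x y`). -/
def mconv (μ ν : Measure E) : Measure E :=
  μ.bind fun x => ν.map fun y => x * y

/-- Additive convolution `μ ⊞ ν`. -/
def aconv (μ ν : Measure E) : Measure E :=
  μ.bind fun x => ν.map fun y => x + y

/-- Additive "deconvolution" `μ ⊟ ν`, the law of `x - y`. -/
def asub (μ ν : Measure E) : Measure E :=
  μ.bind fun x => ν.map fun y => x - y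

/-- `k`-fold additive convolution `μ^{⊞ k}`. -/
def aconvPow (μ : Measure E) : ℕ → Measure E
  | 0 => Measure.dirac 0
  | k + 1 => aconv μ (aconvPow μ k)

/-- The multiplicative convolution `η 0 * η 1 * ⋯ * η (s-1)`. -/
def mulConvFin : {s : ℕ} → (Fin s → Measure E) → Measure E
  | 0, _ => Measure.dirac 1
  | _ + 1, η => mconv (η 0) (mulConvFin fun i => η i.succ)

end

namespace Nu123Aux

open MeasureTheory Complex

variable {E : Type*} [NormedRing E] [NormedAlgebra ℝ E] [FiniteDimensional ℝ E]
  [MeasurableSpace E] [BorelSpace E]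

/-- The character `e(t) = e^{2πit}`. -/
noncomputable def eC (t : ℝ) : ℂ := Complex.exp (2 * Real.pi * Complex.I * t)

lemma eC_norm (t : ℝ) : ‖eC t‖ = 1 := by
  have h : (2 * (Real.pi : ℂ) * Complex.I * (t : ℂ)) = (↑(2 * Real.pi * t) : ℂ) * Complex.I := by
    push_cast; ring
  rw [eC, h, Complex.norm_exp]
  simp [Complex.mul_re]

lemma eC_abs (t : ℝ) : ‖eC t‖ = 1 := eC_norm t

lemma eC_add (s t : ℝ) : eC (s + t) = eC s * eC t := by
  rw [eC, eC, eC, ← Complex.exp_add]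
  push_cast
  ring_nf

lemma eC_zero : eC 0 = 1 := by simp [eC]

lemma eC_conj (t : ℝ) : (starRingEnd ℂ) (eC t) = eC (-t) := by
  rw [eC, eC, ← Complex.exp_conj]
  congr 1
  have h2 : (starRingEnd ℂ) (2 : ℂ) = 2 := map_ofNat _ 2
  rw [map_mul, map_mul, map_mul, Complex.conj_I, Complex.conj_ofReal, Complex.conj_ofReal, h2]
  push_cast
  ring

lemma eC_continuous : Continuous eC :=
  Complex.continuous_exp.comp (by continuity)

lemma mFourier_def (η : Measure E) (ξ : E →L[ℝ] ℝ) :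
    mFourier η ξ = ∫ x, eC (ξ x) ∂η := rfl

lemma integrable_eC_comp {α : Type*} [MeasurableSpace α] (μ : Measure α) [IsFiniteMeasure μ]
    {g : α → ℝ} (hg : AEStronglyMeasurable g μ) :
    Integrable (fun a => eC (g a)) μ := by
  refine (integrable_const (1 : ℝ)).mono' (eC_continuous.comp_aestronglyMeasurable hg) ?_
  filter_upwards with a
  rw [eC_norm]

lemma norm_mFourier_le (η : Measure E) [IsProbabilityMeasure η] (ξ : E →L[ℝ] ℝ) :
    ‖mFourier η ξ‖ ≤ 1 := by
  rw [mFourier_def]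
  refine (norm_integral_le_integral_norm _).trans ?_
  simp_rw [eC_norm]
  simp

/-- Pushforward description of the `bind`-style convolutions. -/
lemma bind_map_eq_map_prod {f : E → E → E} (hf : Measurable (Function.uncurry f))
    (μ ρ : Measure E) [SFinite ρ] :
    (μ.bind fun x => ρ.map (f x)) = (μ.prod ρ).map (Function.uncurry f) := by
  have hfx : ∀ x : E, Measurable (f x) := fun x =>
    hf.comp (measurable_prodMk_left : Measurable (Prod.mk x))
  have hker : Measurable fun x => ρ.map (f x) := by
    apply Measure.measurable_of_measurable_coe
    intro t ht
    have h : (fun x => (ρ.map (f x)) t) = fun x => ρ (Prod.mk x ⁻¹' (Function.uncurry f ⁻¹' t)) := by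
      funext x
      rw [Measure.map_apply (hfx x) ht]
      rfl
    rw [h]
    exact measurable_measure_prodMk_left (hf ht)
  ext s hs
  rw [Measure.bind_apply hs hker.aemeasurable, Measure.map_apply hf hs, Measure.prod_apply (hf hs)]
  refine lintegral_congr fun x => ?_
  rw [Measure.map_apply (hfx x) hs]
  rfl

lemma measurable_mul2 : Measurable fun p : E × E => p.1 * p.2 := measurable_mul

lemma mconv_eq (μ ρ : Measure E) [SFinite ρ] :
    mconv μ ρ = (μ.prod ρ).map fun p : E × E => p.1 * p.2 :=
  bind_map_eq_map_prod (f := fun x y => x * y) measurable_mul μ ρ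

lemma aconv_eq (μ ρ : Measure E) [SFinite ρ] :
    aconv μ ρ = (μ.prod ρ).map fun p : E × E => p.1 + p.2 :=
  bind_map_eq_map_prod (f := fun x y => x + y) measurable_add μ ρ

lemma asub_eq (μ ρ : Measure E) [SFinite ρ] :
    asub μ ρ = (μ.prod ρ).map fun p : E × E => p.1 - p.2 :=
  bind_map_eq_map_prod (f := fun x y => x - y) measurable_sub μ ρ

lemma isProbabilityMeasure_mconv (μ ρ : Measure E) [IsProbabilityMeasure μ]
    [IsProbabilityMeasure ρ] : IsProbabilityMeasure (mconv μ ρ) := by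
  rw [mconv_eq]
  exact Measure.isProbabilityMeasure_map measurable_mul.aemeasurable

lemma isProbabilityMeasure_aconv (μ ρ : Measure E) [IsProbabilityMeasure μ]
    [IsProbabilityMeasure ρ] : IsProbabilityMeasure (aconv μ ρ) := by
  rw [aconv_eq]
  exact Measure.isProbabilityMeasure_map measurable_add.aemeasurable

lemma isProbabilityMeasure_asub (μ ρ : Measure E) [IsProbabilityMeasure μ]
    [IsProbabilityMeasure ρ] : IsProbabilityMeasure (asub μ ρ) := by
  rw [asub_eq]
  exact Measure.isProbabilityMeasure_map measurable_sub.aemeasurable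

lemma isProbabilityMeasure_aconvPow (μ : Measure E) [IsProbabilityMeasure μ] (k : ℕ) :
    IsProbabilityMeasure (aconvPow μ k) := by
  induction k with
  | zero => exact ⟨by simp [aconvPow]⟩
  | succ n ih =>
    haveI := ih
    exact isProbabilityMeasure_aconv μ (aconvPow μ n)

lemma mFourier_map_prod (μ ρ : Measure E) {f : E × E → E} (hf : Measurable f)
    (ξ : E →L[ℝ] ℝ) :
    mFourier ((μ.prod ρ).map f) ξ = ∫ p, eC (ξ (f p)) ∂(μ.prod ρ) := by
  rw [mFourier_def]
  exact integral_map hf.aemeasurable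
    ((eC_continuous.comp ξ.continuous).aestronglyMeasurable)

lemma mFourier_aconv (μ ρ : Measure E) [SFinite μ] [SFinite ρ] (ξ : E →L[ℝ] ℝ) :
    mFourier (aconv μ ρ) ξ = mFourier μ ξ * mFourier ρ ξ := by
  rw [aconv_eq, mFourier_map_prod μ ρ measurable_add ξ]
  simp_rw [map_add, eC_add]
  rw [integral_prod_mul (fun x => eC (ξ x)) (fun y => eC (ξ y))]
  rfl

lemma mFourier_neg_eq_conj (ρ : Measure E) (ξ : E →L[ℝ] ℝ) :
    ∫ y, eC (-(ξ y)) ∂ρ = (starRingEnd ℂ) (mFourier ρ ξ) := by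
  rw [mFourier_def, ← integral_conj]
  simp_rw [eC_conj]

lemma mFourier_asub (μ ρ : Measure E) [SFinite μ] [SFinite ρ] (ξ : E →L[ℝ] ℝ) :
    mFourier (asub μ ρ) ξ = mFourier μ ξ * (starRingEnd ℂ) (mFourier ρ ξ) := by
  rw [asub_eq, mFourier_map_prod μ ρ measurable_sub ξ]
  simp_rw [map_sub, sub_eq_add_neg, eC_add]
  rw [integral_prod_mul (fun x => eC (ξ x)) (fun y => eC (-(ξ y)))]
  rw [mFourier_neg_eq_conj]
  rfl

lemma mFourier_aconvPow (μ : Measure E) [IsProbabilityMeasure μ] (ξ : E →L[ℝ] ℝ) (k : ℕ) :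
    mFourier (aconvPow μ k) ξ = (mFourier μ ξ) ^ k := by
  induction k with
  | zero =>
    rw [pow_zero]
    show mFourier (Measure.dirac 0) ξ = 1
    rw [mFourier_def, integral_dirac]
    simp [eC_zero]
  | succ n ih =>
    haveI := isProbabilityMeasure_aconvPow μ n
    show mFourier (aconv μ (aconvPow μ n)) ξ = _
    rw [mFourier_aconv, ih, pow_succ, mul_comm]

/-- The continuous linear functional `w ↦ ξ (x (w z))`. -/
noncomputable def Lmap (ξ : E →L[ℝ] ℝ) (x z : E) : E →L[ℝ] ℝ :=
  ξ.comp (((ContinuousLinearMap.mul ℝ E) x).comp ((ContinuousLinearMap.mul ℝ E).flip z))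

lemma Lmap_apply (ξ : E →L[ℝ] ℝ) (x z w : E) : Lmap ξ x z w = ξ (x * (w * z)) := rfl

lemma continuous_mFourier_Lmap (Q : Measure E) [IsProbabilityMeasure Q] (ξ : E →L[ℝ] ℝ) :
    Continuous fun p : E × E => mFourier Q (Lmap ξ p.1 p.2) := by
  have h : ∀ p : E × E, mFourier Q (Lmap ξ p.1 p.2) = ∫ w, eC (ξ (p.1 * (w * p.2))) ∂Q :=
    fun p => rfl
  simp only [h]
  apply continuous_of_dominated (bound := fun _ => (1 : ℝ))
  · intro p
    exact ((eC_continuous.comp (ξ.continuous.comp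
      ((continuous_const.mul (continuous_id.mul continuous_const)) :
        Continuous fun w : E => p.1 * (w * p.2))))).aestronglyMeasurable
  · intro p
    filter_upwards with w
    rw [eC_norm]
  · exact integrable_const 1
  · filter_upwards with w
    exact eC_continuous.comp (ξ.continuous.comp
      (continuous_fst.mul (continuous_const.mul continuous_snd)))

lemma norm_mFourier_Lmap_le (Q : Measure E) [IsProbabilityMeasure Q] (ξ : E →L[ℝ] ℝ)
    (p : E × E) : ‖mFourier Q (Lmap ξ p.1 p.2)‖ ≤ 1 :=
  norm_mFourier_le Q _

lemma mFourier_mconv3 (ν Q ν'' : Measure E) [IsProbabilityMeasure ν] [IsProbabilityMeasure Q]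
    [IsProbabilityMeasure ν''] (ξ : E →L[ℝ] ℝ) :
    mFourier (mconv ν (mconv Q ν'')) ξ
      = ∫ p : E × E, mFourier Q (Lmap ξ p.1 p.2) ∂(ν.prod ν'') := by
  haveI := isProbabilityMeasure_mconv Q ν''
  have hm : Measurable fun p : E × E => p.1 * p.2 := measurable_mul
  have hbig : Measurable fun p : E × (E × E) => p.1 * (p.2.1 * p.2.2) :=
    measurable_fst.mul ((measurable_fst.comp measurable_snd).mul
      (measurable_snd.comp measurable_snd))
  have h1 : mconv ν (mconv Q ν'') = (ν.prod (Q.prod ν'')).map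
      (fun p : E × (E × E) => p.1 * (p.2.1 * p.2.2)) := by
    rw [mconv_eq ν (mconv Q ν''), mconv_eq Q ν'']
    have h2 : ν.prod ((Q.prod ν'').map fun p : E × E => p.1 * p.2)
        = (ν.prod (Q.prod ν'')).map (Prod.map id fun p : E × E => p.1 * p.2) := by
      conv_lhs => rw [← Measure.map_id (μ := ν)]
      exact Measure.map_prod_map _ _ measurable_id hm
    rw [h2, Measure.map_map hm (measurable_id.prodMap hm)]
    rfl
  have hInt1 : Integrable (fun p : E × (E × E) => eC (ξ (p.1 * (p.2.1 * p.2.2))))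
      (ν.prod (Q.prod ν'')) :=
    integrable_eC_comp _ ((ξ.continuous.comp (continuous_fst.mul
      ((continuous_fst.comp continuous_snd).mul
        (continuous_snd.comp continuous_snd)))).aestronglyMeasurable)
  have hc := continuous_mFourier_Lmap Q ξ
  have hInt2 : Integrable (fun p : E × E => mFourier Q (Lmap ξ p.1 p.2)) (ν.prod ν'') := by
    refine (integrable_const (1 : ℝ)).mono' hc.aestronglyMeasurable ?_
    filter_upwards with p
    exact norm_mFourier_Lmap_le Q ξ p
  rw [h1, mFourier_def, integral_map hbig.aemeasurable
    ((show Continuous fun x : E => eC (ξ x) from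
      eC_continuous.comp ξ.continuous).aestronglyMeasurable),
    integral_prod _ hInt1, integral_prod _ hInt2]
  refine integral_congr_ae (Filter.Eventually.of_forall fun x => ?_)
  show ∫ q : E × E, eC (ξ (x * (q.1 * q.2))) ∂(Q.prod ν'')
      = ∫ z, mFourier Q (Lmap ξ x z) ∂ν''
  have hIntx : Integrable (fun q : E × E => eC (ξ (x * (q.1 * q.2)))) (Q.prod ν'') :=
    integrable_eC_comp _ ((ξ.continuous.comp (continuous_const.mul
      (continuous_fst.mul continuous_snd))).aestronglyMeasurable)
  rw [integral_prod_symm _ hIntx]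
  rfl

lemma mFourier_asub_pow (ν' : Measure E) [IsProbabilityMeasure ν'] (k : ℕ) (ζ : E →L[ℝ] ℝ) :
    mFourier (asub (aconvPow ν' k) (aconvPow ν' k)) ζ
      = ((‖mFourier ν' ζ‖ ^ (2 * k) : ℝ) : ℂ) := by
  haveI := isProbabilityMeasure_aconvPow ν' k
  rw [mFourier_asub, mFourier_aconvPow, Complex.mul_conj, Complex.normSq_eq_norm_sq, norm_pow,
    ← pow_mul, mul_comm k 2]

end Nu123Aux

noncomputable section

/-- **Positivity and a Hölder comparison for Fourier transforms of multiplicative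
convolutions** (Lemma "nu123" of the paper): with `β_k = ν'^{⊞k} ⊟ ν'^{⊞k}`, the Fourier
transform of `ν * β_k * ν''` is a nonnegative real number dominating
`|(ν * ν' * ν'')^∧(ξ)|^{2k}`. -/
theorem fourier_conv_nonneg_and_bound
    {E : Type*} [NormedRing E] [NormedAlgebra ℝ E] [FiniteDimensional ℝ E]
    [MeasurableSpace E] [BorelSpace E]
    (ν ν' ν'' : Measure E) [IsProbabilityMeasure ν] [IsProbabilityMeasure ν']
    [IsProbabilityMeasure ν''] (k : ℕ) (hk : 1 ≤ k) (ξ : E →L[ℝ] ℝ) :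
    (mFourier (mconv ν (mconv (asub (aconvPow ν' k) (aconvPow ν' k)) ν'')) ξ).im = 0 ∧
    0 ≤ (mFourier (mconv ν (mconv (asub (aconvPow ν' k) (aconvPow ν' k)) ν'')) ξ).re ∧
    ‖mFourier (mconv ν (mconv ν' ν'')) ξ‖ ^ (2 * k)
      ≤ (mFourier (mconv ν (mconv (asub (aconvPow ν' k) (aconvPow ν' k)) ν'')) ξ).re := by
  haveI := Nu123Aux.isProbabilityMeasure_aconvPow ν' k
  haveI := Nu123Aux.isProbabilityMeasure_asub (aconvPow ν' k) (aconvPow ν' k)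
  set P := ν.prod ν'' with hP
  set F : E × E → ℂ := fun p => mFourier ν' (Nu123Aux.Lmap ξ p.1 p.2) with hF
  have hEq2 : mFourier (mconv ν (mconv (asub (aconvPow ν' k) (aconvPow ν' k)) ν'')) ξ
      = ((∫ p, ‖F p‖ ^ (2 * k) ∂P : ℝ) : ℂ) := by
    have hcast : ∫ p, ((‖F p‖ ^ (2 * k) : ℝ) : ℂ) ∂P
        = ((∫ p, ‖F p‖ ^ (2 * k) ∂P : ℝ) : ℂ) := integral_ofReal
    rw [Nu123Aux.mFourier_mconv3, ← hcast]
    exact integral_congr_ae (Filter.Eventually.of_forall fun p =>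
      Nu123Aux.mFourier_asub_pow ν' k _)
  have hEq1 : mFourier (mconv ν (mconv ν' ν'')) ξ = ∫ p, F p ∂P :=
    Nu123Aux.mFourier_mconv3 ν ν' ν'' ξ
  have hFc : Continuous F := Nu123Aux.continuous_mFourier_Lmap ν' ξ
  have hFle : ∀ p, ‖F p‖ ≤ 1 := fun p => by
    exact Nu123Aux.norm_mFourier_Lmap_le ν' ξ p
  have habs : Continuous fun p => ‖F p‖ := continuous_norm.comp hFc
  have hgint : Integrable (fun p => ‖F p‖) P := by
    refine (integrable_const (1 : ℝ)).mono' habs.aestronglyMeasurable ?_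
    filter_upwards with p
    rw [Real.norm_eq_abs, abs_of_nonneg (norm_nonneg _)]
    exact hFle p
  have hgkint : Integrable (fun p => ‖F p‖ ^ (2 * k)) P := by
    refine (integrable_const (1 : ℝ)).mono' ((habs.pow _).aestronglyMeasurable) ?_
    filter_upwards with p
    rw [Real.norm_eq_abs, abs_of_nonneg (pow_nonneg (norm_nonneg _) _)]
    exact pow_le_one₀ (norm_nonneg _) (hFle p)
  refine ⟨by rw [hEq2, Complex.ofReal_im], ?_, ?_⟩
  · rw [hEq2, Complex.ofReal_re]
    exact integral_nonneg fun p => pow_nonneg (norm_nonneg _) _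
  · rw [hEq2, hEq1, Complex.ofReal_re]
    have step1 : ‖∫ p, F p ∂P‖ ^ (2 * k)
        ≤ (∫ p, ‖F p‖ ∂P) ^ (2 * k) := by
      refine pow_le_pow_left₀ (norm_nonneg _) ?_ _
      simpa using norm_integral_le_integral_norm F (μ := P)
    refine step1.trans ?_
    have hconv : ConvexOn ℝ Set.univ fun t : ℝ => t ^ (2 * k) :=
      (even_two_mul k).convexOn_pow
    have := hconv.map_integral_le (μ := P) (f := fun p => ‖F p‖)
      (continuous_pow _).continuousOn isClosed_univ
      (Filter.Eventually.of_forall fun p => Set.mem_univ _) hgint hgkint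
    exact this

end
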